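/- Let n and k be integers with n > k > 1, and let l be a positive integer such that l < 2^{n−k} and the binary expansion of l contains at most k ones. Then there exists a proto-characteristic sequence of length n (i.e. indexed 0 to n−1) whose last term equals l. -/

import Mathlib

/-- A sequence `(m 0, …, m (n-1))` of nonnegative integers is proto-characteristic if:
`m 0 = 0`; there is `k₁` with `1 ≤ k₁ ≤ n - 1`, `m 1 = … = m k₁ = 1` and `m (k₁+1) > 1`
if `k₁ < n - 1`; the sequence is non-decreasing; and (if `k₁ < n - 1`) there are
functions `t₁, t₂ : {k₁+1,…,n-1} → {1,…,n-1}` with `m (t₁ k) + m (t₂ k) = m k`,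
`t₁ k, t₂ k < k`, and for `k₁ < h₁ < h₂ < n` at least one of `t₁ h₁ < t₁ h₂`,
`t₂ h₁ < t₂ h₂` holds. -/
def ProtoChar (n : ℕ) (m : ℕ → ℕ) : Prop :=
  2 ≤ n ∧ m 0 = 0 ∧
  ∃ k₁ : ℕ, 1 ≤ k₁ ∧ k₁ ≤ n - 1 ∧ (∀ i : ℕ, 1 ≤ i → i ≤ k₁ → m i = 1) ∧
    (k₁ < n - 1 → 1 < m (k₁ + 1)) ∧
    (∀ i j : ℕ, i ≤ j → j ≤ n - 1 → m i ≤ m j) ∧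
    (k₁ < n - 1 → ∃ t₁ t₂ : ℕ → ℕ,
      (∀ k : ℕ, k₁ < k → k < n →
        1 ≤ t₁ k ∧ t₁ k ≤ n - 1 ∧ 1 ≤ t₂ k ∧ t₂ k ≤ n - 1 ∧
        m (t₁ k) + m (t₂ k) = m k ∧ t₁ k < k ∧ t₂ k < k) ∧
      (∀ h₁ h₂ : ℕ, k₁ < h₁ → h₁ < h₂ → h₂ < n → t₁ h₁ < t₁ h₂ ∨ t₂ h₁ < t₂ h₂))

/-- The binary addition chain for `l`: starts at 1, ends at `l`, each step doubles
or adds one. -/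
def binChain : ℕ → List ℕ
  | l =>
    if h : l ≤ 1 then [1]
    else
      binChain (l / 2) ++ (if l % 2 = 0 then [l] else [l - 1, l])
  decreasing_by exact Nat.div_lt_self (by omega) one_lt_two

lemma binChain_cons (l : ℕ) : ∃ t, binChain l = 1 :: t := by
  induction l using Nat.strong_induction_on with
  | _ l ih =>
    rw [binChain]
    split
    · exact ⟨[], rfl⟩
    · next h =>
      obtain ⟨t, ht⟩ := ih (l / 2) (Nat.div_lt_self (by omega) one_lt_two)
      rw [ht]
      exact ⟨_, rfl⟩

lemma binChain_ne_nil (l : ℕ) : binChain l ≠ [] := by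
  obtain ⟨t, ht⟩ := binChain_cons l
  simp [ht]

lemma binChain_getLast? (l : ℕ) (hl : 1 ≤ l) :
    (binChain l).getLast? = some l := by
  induction l using Nat.strong_induction_on with
  | _ l ih =>
    rw [binChain]
    split
    · next h =>
      have : l = 1 := by omega
      simp [this]
    · next h =>
      rw [List.getLast?_append_of_ne_nil _ (by split <;> simp)]
      split <;> simp

lemma binChain_pos (l : ℕ) : ∀ x ∈ binChain l, 1 ≤ x := by
  induction l using Nat.strong_induction_on with
  | _ l ih =>
    rw [binChain]
    split
    · simp
    · next h =>
      intro x hx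
      rw [List.mem_append] at hx
      rcases hx with hx | hx
      · exact ih (l / 2) (Nat.div_lt_self (by omega) one_lt_two) x hx
      · split at hx <;> simp at hx <;> omega

lemma binChain_chain' (l : ℕ) :
    List.Chain' (fun a b => b = 2 * a ∨ b = a + 1) (binChain l) := by
  induction l using Nat.strong_induction_on with
  | _ l ih =>
    rw [binChain]
    split
    · exact List.isChain_singleton _
    · next h =>
      apply List.IsChain.append (ih (l / 2) (Nat.div_lt_self (by omega) one_lt_two))
      · split
        · simp
        · refine List.isChain_pair.mpr ?_
          right; omega
      · intro x hx y hy
        rw [binChain_getLast? (l / 2) (by omega)] at hx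
        simp at hx
        subst hx
        split at hy <;> simp at hy <;> omega

lemma binChain_length (l : ℕ) (hl : 1 ≤ l) :
    (binChain l).length + 1 = (Nat.digits 2 l).length + (Nat.digits 2 l).count 1 := by
  induction l using Nat.strong_induction_on with
  | _ l ih =>
    rw [binChain]
    split
    · next h =>
      have : l = 1 := by omega
      subst this
      simp
    · next h =>
      have h2 : Nat.digits 2 l = l % 2 :: Nat.digits 2 (l / 2) :=
        Nat.digits_def' one_lt_two (by omega)
      have ihd := ih (l / 2) (Nat.div_lt_self (by omega) one_lt_two)
        (Nat.one_le_div_iff (by omega) |>.mpr (by omega))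
      rw [h2, List.length_append, List.length_cons, List.count_cons]
      have hm : l % 2 = 0 ∨ l % 2 = 1 := by omega
      rcases hm with hm | hm <;> rw [hm] <;> simp [hm] <;> omega

theorem protoChar_of_binary (n k l : ℕ) (hk : 1 < k) (hkn : k < n)
    (hl : 0 < l) (hlt : l < 2 ^ (n - k))
    (hones : (Nat.digits 2 l).count 1 ≤ k) :
    ∃ m : ℕ → ℕ, ProtoChar n m ∧ m (n - 1) = l := by
  set C := binChain l with hC
  set L := C.length with hL
  -- length bound on digits
  have hb : (Nat.digits 2 l).length ≤ n - k := by
    by_contra hcon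
    push_neg at hcon
    have := Nat.base_pow_length_digits_le 2 l one_lt_two (by omega)
    have h2 : 2 ^ (n - k + 1) ≤ 2 ^ (Nat.digits 2 l).length :=
      Nat.pow_le_pow_right (by norm_num) (by omega)
    have : 2 ^ (n - k) * 2 ≤ 2 * l := by
      calc 2 ^ (n - k) * 2 = 2 ^ (n - k + 1) := by ring
        _ ≤ 2 ^ (Nat.digits 2 l).length := h2
        _ ≤ 2 * l := this
    omega
  have hCL : (binChain l).length = L := rfl
  have hCL' : C.length = L := rfl
  have hlen : L + 1 = (Nat.digits 2 l).length + (Nat.digits 2 l).count 1 :=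
    binChain_length l hl
  have hL1 : 1 ≤ L := List.length_pos_iff.mpr (binChain_ne_nil l)
  have hLn : L ≤ n - 1 := by omega
  set k₁ := n - L with hk₁
  have hk₁1 : 1 ≤ k₁ := by omega
  have hk₁n : k₁ ≤ n - 1 := by omega
  set m : ℕ → ℕ := fun i => if i < k₁ then min i 1 else C.getD (i - k₁) l with hm
  -- basic value facts
  obtain ⟨tl, htl⟩ := binChain_cons l
  have hhead : ∀ d, C.getD 0 d = 1 := by intro d; rw [hC, htl]; rfl
  have hget : ∀ i, (hi : i < L) → ∀ d, C.getD i d = C.get ⟨i, hi⟩ := by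
    intro i hi d
    exact List.getD_eq_get C d ⟨i, hi⟩
  have hchain := binChain_chain' l
  rw [show List.Chain' _ _ = List.IsChain _ _ from rfl, List.isChain_iff_getElem] at hchain
  have hstep : ∀ j, j + 1 < L →
      C.getD (j + 1) l = 2 * C.getD j l ∨ C.getD (j + 1) l = C.getD j l + 1 := by
    intro j hj
    rw [hget j (by omega) l, hget (j + 1) hj l]
    exact hchain j (by omega)
  have hposC : ∀ i, i < L → 1 ≤ C.getD i l := by
    intro i hi
    rw [hget i hi l]
    exact binChain_pos l _ (C.get_mem ⟨i, hi⟩)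
  -- m values at 1..k₁ are 1
  have hones1 : ∀ i : ℕ, 1 ≤ i → i ≤ k₁ → m i = 1 := by
    intro i h1 h2
    rw [hm]
    simp only
    split
    · omega
    · have : i = k₁ := by omega
      rw [this, Nat.sub_self, hhead]
  -- m for i ≥ k₁
  have hmge : ∀ i, k₁ ≤ i → m i = C.getD (i - k₁) l := by
    intro i hi
    rw [hm]; simp only; rw [if_neg (by omega)]
  -- adjacent monotone
  have hmono1 : ∀ i, i + 1 ≤ n - 1 → m i ≤ m (i + 1) := by
    intro i hi
    rcases lt_or_ge (i + 1) k₁ with h | h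
    · rw [hm]; simp only
      rw [if_pos h, if_pos (by omega)]
      omega
    rcases lt_or_ge i k₁ with h' | h'
    · have : i + 1 = k₁ := by omega
      rw [hones1 (i+1) (by omega) (by omega)]
      rw [hm]; simp only; rw [if_pos h']; omega
    · rw [hmge i h', hmge (i+1) (by omega)]
      have hj : i - k₁ + 1 = i + 1 - k₁ := by omega
      have hjlt : i - k₁ + 1 < L := by omega
      rcases hstep (i - k₁) hjlt with hs | hs <;> rw [← hj, hs] <;>
        have := hposC (i - k₁) (by omega) <;> omega
  have hmono : ∀ i j : ℕ, i ≤ j → j ≤ n - 1 → m i ≤ m j := by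
    intro i j hij hj
    induction j with
    | zero =>
      have : i = 0 := by omega
      rw [this]
    | succ j ihj =>
      rcases Nat.lt_or_ge i (j + 1) with h | h
      · exact le_trans (ihj (by omega) (by omega)) (hmono1 j hj)
      · have : i = j + 1 := by omega
        rw [this]
  refine ⟨m, ⟨by omega, ?_, k₁, hk₁1, hk₁n, hones1, ?_, hmono, ?_⟩, ?_⟩
  · rw [hm]; simp only; rw [if_pos (by omega)]; simp
  · -- 1 < m (k₁ + 1)
    intro hlt'
    have h2L : 2 ≤ L := by omega
    rw [hmge (k₁ + 1) (by omega)]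
    have : k₁ + 1 - k₁ = 0 + 1 := by omega
    rw [this]
    rcases hstep 0 (by omega) with hs | hs <;> rw [hs, hhead] <;> omega
  · -- t functions
    intro hlt'
    refine ⟨fun j => j - 1, fun j => if m j = 2 * m (j - 1) then j - 1 else 1, ?_, ?_⟩
    · intro j hj1 hjn
      beta_reduce
      have hj2 : 2 ≤ j := by omega
      have hsum : m (j - 1) + m (j - 1) = m j ∨ m 1 + m (j - 1) = m j := by
        rw [hmge (j - 1) (by omega), hmge j (by omega),
          hones1 1 le_rfl (by omega)]
        have h1 : j - 1 - k₁ + 1 = j - k₁ := by omega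
        rcases hstep (j - 1 - k₁) (by omega) with hs | hs <;> rw [h1] at hs <;> omega
      constructor
      · omega
      constructor
      · omega
      refine ⟨?_, ?_, ?_, by omega, ?_⟩
      · split <;> omega
      · split <;> omega
      · split
        · next h => omega
        · next h =>
          rcases hsum with hs | hs
          · omega
          · omega
      · split <;> omega
    · intro h₁ h₂ hh1 hh2 hh3
      beta_reduce
      left; omega
  · -- m (n - 1) = l
    rw [hmge (n - 1) (by omega)]
    have h1 : n - 1 - k₁ = L - 1 := by omega
    have h2 : C.getLast? = some l := binChain_getLast? l hl
    rw [List.getLast?_eq_getElem?] at h2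
    rw [h1, List.getD_eq_getElem?_getD, h2]
    rfl
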